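/- Let B be a balanced configuration of seven nonzero vectors in ℝ² that spans the plane. Then the sum of all vectors of B is zero (B is nonconfluent). -/

import Mathlib

noncomputable def det2 (u v : ℝ × ℝ) : ℝ := u.1 * v.2 - u.2 * v.1

def symmZero (S : Multiset ℝ) : Prop := S.map (fun x => -x) = S

noncomputable def dets {n : ℕ} (b : Fin n → ℝ × ℝ) (j : Fin n) : Multiset ℝ :=
  (Finset.univ.filter (fun i => det2 (b i) (b j) ≠ 0)).val.map (fun i => det2 (b i) (b j))

lemma symmZero_sum {S : Multiset ℝ} (h : symmZero S) : S.sum = 0 := by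
  have h1 : (S.map (fun x => -x)).sum = -S.sum := by
    simp [Multiset.sum_map_neg']
  rw [h] at h1
  linarith

lemma det2_mem_span {s v : ℝ × ℝ} (h : v ∈ Submodule.span ℝ ({s} : Set (ℝ × ℝ))) :
    det2 s v = 0 := by
  rw [Submodule.mem_span_singleton] at h
  obtain ⟨c, rfl⟩ := h
  simp [det2, Prod.smul_def, smul_eq_mul]
  ring

/-- A balanced configuration of seven nonzero plane vectors spanning the plane is
nonconfluent: the vectors sum to zero. -/
theorem stmt11 (b : Fin 7 → ℝ × ℝ) (hnz : ∀ i, b i ≠ 0)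
    (hspan : Submodule.span ℝ (Set.range b) = ⊤)
    (hbal : ∀ j, symmZero (dets b j)) :
    ∑ i, b i = 0 := by
  set S := ∑ i, b i with hS
  have hdet : ∀ j, det2 S (b j) = 0 := by
    intro j
    have h1 : (dets b j).sum = 0 := symmZero_sum (hbal j)
    have h2 : (dets b j).sum
        = ∑ i ∈ Finset.univ.filter (fun i => det2 (b i) (b j) ≠ 0), det2 (b i) (b j) := rfl
    have h3 : ∑ i ∈ Finset.univ.filter (fun i => det2 (b i) (b j) ≠ 0), det2 (b i) (b j)
        = ∑ i, det2 (b i) (b j) := by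
      apply Finset.sum_filter_of_ne
      intro i _ h h'
      exact h h'
    have h4 : ∑ i, det2 (b i) (b j) = det2 S (b j) := by
      simp only [det2, hS, Prod.fst_sum, Prod.snd_sum, Finset.sum_mul]
      rw [Finset.sum_sub_distrib]
    rw [h2, h3, h4] at h1
    exact h1
  by_contra hS0
  have hmem : ∀ j, b j ∈ Submodule.span ℝ ({S} : Set (ℝ × ℝ)) := by
    intro j
    rw [Submodule.mem_span_singleton]
    have h := hdet j
    rcases Prod.mk.injEq .. ▸ (by exact fun h => hS0 h : S = 0 → False) with _
    -- case split on components of S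
    by_cases h1 : S.1 ≠ 0
    · refine ⟨(b j).1 / S.1, ?_⟩
      have : S.1 * (b j).2 = S.2 * (b j).1 := by
        simp [det2] at h; linarith
      apply Prod.ext
      · simp only [Prod.smul_fst, smul_eq_mul]
        field_simp
      · simp only [Prod.smul_snd, smul_eq_mul]
        field_simp
        nlinarith [this]
    · push_neg at h1
      have h2 : S.2 ≠ 0 := by
        intro h2
        exact hS0 (Prod.ext h1 h2)
      refine ⟨(b j).2 / S.2, ?_⟩
      have hb1 : (b j).1 = 0 := by
        simp [det2, h1] at h
        rcases h with h | h
        · exact absurd h h2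
        · exact h
      apply Prod.ext
      · simp [h1, hb1]
      · simp only [Prod.smul_snd, smul_eq_mul]
        field_simp
  have : Submodule.span ℝ (Set.range b) ≤ Submodule.span ℝ ({S} : Set (ℝ × ℝ)) := by
    rw [Submodule.span_le]
    rintro _ ⟨j, rfl⟩
    exact hmem j
  rw [hspan, top_le_iff] at this
  have hw : ((-S.2, S.1) : ℝ × ℝ) ∈ Submodule.span ℝ ({S} : Set (ℝ × ℝ)) := this ▸ trivial
  have := det2_mem_span hw
  simp [det2] at this
  have hsq : S.1 * S.1 + S.2 * S.2 = 0 := by nlinarith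
  have h1 : S.1 = 0 := by nlinarith [sq_nonneg S.1, sq_nonneg S.2]
  have h2 : S.2 = 0 := by nlinarith [sq_nonneg S.1, sq_nonneg S.2]
  exact hS0 (Prod.ext h1 h2)
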